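/- arXiv:2405.16212 — 2 statements merged into one kernel-verified Lean document; each statement's English description precedes it below -/
import Mathlib

section
/- Let A be a unital C*-algebra and a ∈ A. Then for all nonzero complex numbers α and β: v(a)³ ≤ (max{1,|α−1|}/(2|α|))·‖a*a + aa*‖·‖a‖ + (max{1,|β−1|}/|αβ|)·‖a²‖·‖a‖ + (1/|αβ|)·v(a³). -/
open scoped ComplexOrder

/-- A state on a unital `C*`-algebra: a positive linear functional `φ` (equivalently, since the
algebra is complete, `φ (star b * b) ≥ 0` for all `b`) with `φ 1 = 1`. -/
def IsState {A : Type*} [CStarAlgebra A] (φ : A →ₗ[ℂ] ℂ) : Prop :=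
  (∀ b : A, 0 ≤ φ (star b * b)) ∧ φ 1 = 1

/-- The numerical radius of an element of a unital `C*`-algebra:
`v(a) = sup { |φ(a)| : φ a state on A }`. -/
noncomputable def numRadius {A : Type*} [CStarAlgebra A] (a : A) : ℝ :=
  sSup {r : ℝ | ∃ φ : A →ₗ[ℂ] ℂ, IsState φ ∧ r = ‖φ a‖}

section StateLemmas
variable {A : Type*} [CStarAlgebra A] {φ : A →ₗ[ℂ] ℂ}



lemma conj_smul_mul_re (r : ℝ) (u : ℂ) :
    (starRingEnd ℂ (r • u) * u).re = r * ‖u‖ ^ 2 := by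
  simp [Complex.mul_re, Complex.smul_re, Complex.smul_im, Complex.sq_norm, Complex.normSq_apply]
  ring

lemma normSq_real_smul (r : ℝ) (u : ℂ) :
    Complex.normSq (r • u) = r ^ 2 * ‖u‖ ^ 2 := by
  simp [Complex.normSq_apply, Complex.smul_re, Complex.smul_im, Complex.sq_norm]
  ring

lemma state_im (hφ : IsState φ) (b : A) : (φ (star b * b)).im = 0 :=
  ((Complex.nonneg_iff.mp (hφ.1 b)).2).symm

lemma state_re (hφ : IsState φ) (b : A) : 0 ≤ (φ (star b * b)).re :=
  (Complex.nonneg_iff.mp (hφ.1 b)).1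

/-- expansion of the positive form -/
lemma state_expand (hφ : IsState φ) (x y : A) (t : ℂ) :
    φ (star (x - t • y) * (x - t • y)) =
      φ (star x * x) - t * φ (star x * y) - (starRingEnd ℂ t) * φ (star y * x)
        + t * (starRingEnd ℂ t) * φ (star y * y) := by
  simp only [star_sub, star_smul, RCLike.star_def, sub_mul, mul_sub, smul_mul_assoc,
    mul_smul_comm, map_sub, map_smul, smul_eq_mul]
  ring

lemma state_herm (hφ : IsState φ) (x y : A) : φ (star x * y) = starRingEnd ℂ (φ (star y * x)) := by
  have h1 : ((φ (star x * y)) + (φ (star y * x))).im = 0 := by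
    have := state_im hφ (x + y)
    simp only [star_add, add_mul, mul_add, map_add] at this
    have ix := state_im hφ x
    have iy := state_im hφ y
    simp only [Complex.add_im] at this ⊢
    linarith
  have h2 : ((φ (star x * y)) - (φ (star y * x))).re = 0 := by
    have := state_im hφ (y + Complex.I • x)
    simp only [star_add, star_smul, RCLike.star_def, add_mul, mul_add, smul_mul_assoc,
      mul_smul_comm, map_add, map_smul, smul_eq_mul, Complex.conj_I] at this
    have ix := state_im hφ x
    have iy := state_im hφ y
    simp only [Complex.add_im, Complex.sub_re, Complex.mul_im, Complex.neg_re, Complex.neg_im,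
      Complex.I_re, Complex.I_im, Complex.mul_re] at this ⊢
    linarith
  apply Complex.ext
  · simpa [Complex.sub_re, sub_eq_zero] using h2
  · simp only [Complex.conj_im]
    simp only [Complex.add_im] at h1
    linarith

lemma state_star_apply (hφ : IsState φ) (z : A) : φ (star z) = starRingEnd ℂ (φ z) := by
  simpa using state_herm hφ z 1

/-- Cauchy–Schwarz for states. -/
lemma state_CS (hφ : IsState φ) (x y : A) :
    ‖φ (star y * x)‖ ^ 2 ≤ (φ (star x * x)).re * (φ (star y * y)).re := by
  set u := φ (star y * x) with hu
  set p := (φ (star x * x)).re with hp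
  set q := (φ (star y * y)).re with hq
  have hp0 : 0 ≤ p := state_re hφ x
  have hq0 : 0 ≤ q := state_re hφ y
  have key : ∀ t : ℂ, 0 ≤ p - 2 * (starRingEnd ℂ t * u).re + Complex.normSq t * q := by
    intro t
    have h := state_re hφ (x - t • y)
    rw [state_expand hφ x y t] at h
    have hxy : φ (star x * y) = starRingEnd ℂ u := state_herm hφ x y
    rw [hxy] at h
    have : (t * starRingEnd ℂ u).re = (starRingEnd ℂ t * u).re := by
      simp only [Complex.mul_re, Complex.conj_re, Complex.conj_im]; ring
    have h2 : (t * starRingEnd ℂ t * φ (star y * y)).re = Complex.normSq t * q := by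
      rw [Complex.mul_re]
      have : (t * starRingEnd ℂ t).im = 0 := by simp [Complex.mul_im]; ring
      rw [this]
      simp only [Complex.mul_re, Complex.normSq_apply, hq, Complex.conj_re, Complex.conj_im]
      ring
    simp only [Complex.sub_re, Complex.add_re] at h
    rw [h2, this] at h
    linarith [h]
  rcases eq_or_lt_of_le hq0 with hq1 | hq1
  · -- q = 0 : show u = 0
    have hu0 : ‖u‖ = 0 := by
      by_contra hne
      have habs : 0 < ‖u‖ := lt_of_le_of_ne (norm_nonneg u) (Ne.symm hne)
      have := key (((p + 1) / (2 * ‖u‖ ^ 2) : ℝ) • u)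
      rw [← hq1] at this
      rw [conj_smul_mul_re] at this
      have h2 : ((p + 1) / (2 * ‖u‖ ^ 2)) * ‖u‖ ^ 2 = (p + 1) / 2 := by
        field_simp
      rw [h2] at this
      simp at this
      linarith
    rw [hu0, ← hq1]
    simp [hp0]
  · -- q > 0
    have := key ((q⁻¹ : ℝ) • u)
    rw [conj_smul_mul_re, normSq_real_smul] at this
    have hq' : q ≠ 0 := ne_of_gt hq1
    have : 0 ≤ p - q⁻¹ * ‖u‖ ^ 2 := by
      have e : q⁻¹ ^ 2 * ‖u‖ ^ 2 * q = q⁻¹ * ‖u‖ ^ 2 := by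
        field_simp
      linarith [this, e ▸ this]
    calc ‖u‖ ^ 2 = (q⁻¹ * ‖u‖ ^ 2) * q := by field_simp
    _ ≤ p * q := by
      apply mul_le_mul_of_nonneg_right _ hq0
      linarith


lemma state_nonneg_of_exists (h : ∀ b : A, 0 ≤ φ (star b * b)) (x : A)
    (hx : ∃ c : A, x = star c * c) : 0 ≤ φ x := by
  obtain ⟨c, rfl⟩ := hx; exact h c

lemma state_sq_le (hφ : IsState φ) (b : A) :
    (φ (star b * b)).re ≤ ‖b‖ ^ 2 := by
  letI := CStarAlgebra.spectralOrder A
  letI := CStarAlgebra.spectralOrderedRing A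
  have hle : star b * b ≤ algebraMap ℝ A (‖b‖ ^ 2) :=
    CStarAlgebra.star_mul_le_algebraMap_norm_sq
  have hpos : (0 : A) ≤ algebraMap ℝ A (‖b‖ ^ 2) - star b * b := sub_nonneg.mpr hle
  have hφpos : 0 ≤ φ (algebraMap ℝ A (‖b‖ ^ 2) - star b * b) := by
    apply state_nonneg_of_exists hφ.1
    refine ⟨CFC.sqrt (algebraMap ℝ A (‖b‖ ^ 2) - star b * b), ?_⟩
    rw [(IsSelfAdjoint.of_nonneg (CFC.sqrt_nonneg
      (a := algebraMap ℝ A (‖b‖ ^ 2) - star b * b))).star_eq,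
      CFC.sqrt_mul_sqrt_self _ hpos]
  have halg : φ (algebraMap ℝ A (‖b‖ ^ 2)) = (‖b‖ ^ 2 : ℝ) := by
    rw [IsScalarTower.algebraMap_apply ℝ ℂ A, Algebra.algebraMap_eq_smul_one, map_smul, hφ.2]
    simp
  rw [map_sub, halg] at hφpos
  have := (Complex.nonneg_iff.mp hφpos).1
  simp only [Complex.sub_re, Complex.ofReal_re] at this
  linarith

lemma state_selfadj_le (hφ : IsState φ) (p : A)
    (hp : IsSelfAdjoint p) : (φ p).re ≤ ‖p‖ := by
  letI := CStarAlgebra.spectralOrder A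
  letI := CStarAlgebra.spectralOrderedRing A
  have hle : p ≤ algebraMap ℝ A ‖p‖ := IsSelfAdjoint.le_algebraMap_norm_self hp
  have hpos : (0 : A) ≤ algebraMap ℝ A ‖p‖ - p := sub_nonneg.mpr hle
  have hφpos : 0 ≤ φ (algebraMap ℝ A ‖p‖ - p) := by
    apply state_nonneg_of_exists hφ.1
    refine ⟨CFC.sqrt (algebraMap ℝ A ‖p‖ - p), ?_⟩
    rw [(IsSelfAdjoint.of_nonneg (CFC.sqrt_nonneg (a := algebraMap ℝ A ‖p‖ - p))).star_eq,
      CFC.sqrt_mul_sqrt_self _ hpos]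
  have halg : φ (algebraMap ℝ A ‖p‖) = (‖p‖ : ℝ) := by
    rw [IsScalarTower.algebraMap_apply ℝ ℂ A, Algebra.algebraMap_eq_smul_one, map_smul, hφ.2]
    simp
  rw [map_sub, halg] at hφpos
  have := (Complex.nonneg_iff.mp hφpos).1
  simp only [Complex.sub_re, Complex.ofReal_re] at this
  linarith

lemma le_of_sq_le_sq' {x y : ℝ} (hx : 0 ≤ x) (hy : 0 ≤ y) (h : x ^ 2 ≤ y ^ 2) : x ≤ y := by
  nlinarith

lemma state_abs_le_norm (hφ : IsState φ) (b : A) : ‖φ b‖ ≤ ‖b‖ := by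
  have h := state_CS hφ b 1
  simp only [star_one, one_mul, hφ.2, Complex.one_re, mul_one] at h
  refine le_of_sq_le_sq' (norm_nonneg _) (norm_nonneg _) ?_
  calc ‖φ b‖ ^ 2 ≤ (φ (star b * b)).re := by
        simpa using h
  _ ≤ ‖b‖ ^ 2 := state_sq_le hφ b

lemma state_abs_sq_le_mul_star (hφ : IsState φ) (a : A) :
    ‖φ a‖ ^ 2 ≤ (φ (a * star a)).re := by
  have h := state_CS hφ 1 (star a)
  simpa [hφ.2] using h

/-- expansion of `φ ((a - c•1) * star (a - c•1))` -/
lemma state_shift_expand (hφ : IsState φ) (a : A) (c : ℂ) :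
    (φ ((a - c • 1) * star (a - c • 1))).re
      = (φ (a * star a)).re - 2 * (c * starRingEnd ℂ (φ a)).re + Complex.normSq c := by
  have expand : φ ((a - c • 1) * star (a - c • 1))
      = φ (a * star a) - starRingEnd ℂ c * φ a - c * starRingEnd ℂ (φ a)
        + c * starRingEnd ℂ c := by
    rw [← state_star_apply hφ a]
    simp only [star_sub, star_smul, star_one, RCLike.star_def, sub_mul, mul_sub,
      smul_mul_assoc, mul_smul_comm, mul_one, one_mul, smul_smul, map_sub, map_add, map_smul,
      smul_eq_mul, hφ.2]
    ring
  rw [expand]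
  simp only [Complex.sub_re, Complex.add_re, Complex.mul_re, Complex.conj_re, Complex.conj_im,
    Complex.normSq_apply]
  ring

lemma state_gamma_bound (hφ : IsState φ) (a : A) (γ : ℂ) :
    (φ ((a - (γ * φ a) • 1) * star (a - (γ * φ a) • 1))).re
      ≤ max 1 (‖γ - 1‖) ^ 2 * (φ (a * star a)).re := by
  set l := φ a
  set P := (φ (a * star a)).re with hP
  have hre := state_shift_expand hφ a (γ * l)
  have key : (γ * l * starRingEnd ℂ l).re = γ.re * Complex.normSq l := by
    simp only [Complex.mul_re, Complex.mul_im, Complex.conj_re, Complex.conj_im,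
      Complex.normSq_apply]
    ring
  have hns : Complex.normSq (γ * l) = Complex.normSq γ * Complex.normSq l := map_mul _ _ _
  have hid : (φ ((a - (γ * l) • 1) * star (a - (γ * l) • 1))).re
      = P - Complex.normSq l * (1 - ‖γ - 1‖ ^ 2) := by
    rw [hre, key, hns, Complex.sq_norm]
    simp only [Complex.normSq_apply, Complex.sub_re, Complex.sub_im, Complex.one_re,
      Complex.one_im]
    ring
  rw [hid]
  have hlP : Complex.normSq l ≤ P := by
    have := state_abs_sq_le_mul_star hφ a
    rwa [Complex.sq_norm] at this
  have hl0 : 0 ≤ Complex.normSq l := Complex.normSq_nonneg l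
  set m := max 1 (‖γ - 1‖) with hm
  have hm1 : 1 ≤ m := le_max_left _ _
  have hmd : ‖γ - 1‖ ≤ m := le_max_right _ _
  have hd0 : 0 ≤ ‖γ - 1‖ := norm_nonneg _
  have hd2 : ‖γ - 1‖ ^ 2 ≤ m ^ 2 := by nlinarith
  have hP0 : 0 ≤ P := by
    have : a * star a = star (star a) * star a := by rw [star_star]
    rw [hP, this]; exact state_re hφ (star a)
  nlinarith [mul_le_mul_of_nonneg_left hd2 hl0, mul_le_mul_of_nonneg_right hlP
    (by nlinarith : (0:ℝ) ≤ m ^ 2 - 1)]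


lemma state_key (hφ : IsState φ) (a : A) (α β : ℂ) (hα : α ≠ 0) (hβ : β ≠ 0) :
    ‖φ a‖ ^ 3 ≤
      max 1 (‖α - 1‖) / (2 * ‖α‖) * ‖star a * a + a * star a‖ * ‖a‖
        + max 1 (‖β - 1‖) / ‖α * β‖ * ‖a ^ 2‖ * ‖a‖
        + (1 / ‖α * β‖) * ‖φ (a ^ 3)‖ := by
  set l := φ a with hl
  set T2 := φ ((a - (β * l) • 1) * a ^ 2) with hT2def
  set T3 := φ ((a - (α * l) • 1) * a) with hT3def
  -- the algebraic identity
  have hid : φ (a ^ 3) - T2 - β * l * T3 = α * β * l ^ 3 := by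
    rw [hT2def, hT3def]
    simp only [sub_mul, smul_mul_assoc, map_sub, map_smul, smul_eq_mul, one_mul,
      ← pow_succ', ← sq]
    ring
  -- setup of real quantities
  set P := (φ (a * star a)).re with hP
  set Q := (φ (star a * a)).re with hQ
  have hP0 : 0 ≤ P := by
    rw [hP, show a * star a = star (star a) * star a by rw [star_star]]
    exact state_re hφ (star a)
  have hQ0 : 0 ≤ Q := state_re hφ a
  have hPa : P ≤ ‖a‖ ^ 2 := by
    rw [hP, show a * star a = star (star a) * star a by rw [star_star]]
    calc (φ (star (star a) * star a)).re ≤ ‖star a‖ ^ 2 := state_sq_le hφ (star a)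
    _ = ‖a‖ ^ 2 := by rw [norm_star]
  set mα := max 1 (‖α - 1‖) with hmα
  set mβ := max 1 (‖β - 1‖) with hmβ
  have hmα0 : 0 ≤ mα := le_trans zero_le_one (le_max_left _ _)
  have hmβ0 : 0 ≤ mβ := le_trans zero_le_one (le_max_left _ _)
  -- bound on T2
  have hT2 : ‖T2‖ ≤ mβ * ‖a ^ 2‖ * ‖a‖ := by
    refine le_of_sq_le_sq' (norm_nonneg _) (by positivity) ?_
    have hcs := state_CS hφ (a ^ 2) (star (a - (β * l) • 1))
    rw [star_star] at hcs
    have h1 : (φ (star (a ^ 2) * a ^ 2)).re ≤ ‖a ^ 2‖ ^ 2 := state_sq_le hφ (a ^ 2)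
    have h2 := state_gamma_bound hφ a β
    rw [← hl, ← hmβ, ← hP] at h2
    calc ‖T2‖ ^ 2
        ≤ (φ (star (a ^ 2) * a ^ 2)).re
            * (φ ((a - (β * l) • 1) * star (a - (β * l) • 1))).re := hcs
      _ ≤ ‖a ^ 2‖ ^ 2 * (mβ ^ 2 * P) := by
          have hpos : 0 ≤ (φ ((a - (β * l) • 1) * star (a - (β * l) • 1))).re := by
            rw [show (a - (β * l) • 1) * star (a - (β * l) • 1)
              = star (star (a - (β * l) • 1)) * star (a - (β * l) • 1) by rw [star_star]]
            exact state_re hφ _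
          exact mul_le_mul h1 h2 hpos (by positivity)
      _ ≤ ‖a ^ 2‖ ^ 2 * (mβ ^ 2 * ‖a‖ ^ 2) := by
          apply mul_le_mul_of_nonneg_left _ (by positivity)
          exact mul_le_mul_of_nonneg_left hPa (by positivity)
      _ = (mβ * ‖a ^ 2‖ * ‖a‖) ^ 2 := by ring
  -- bound on T3
  have hT3 : ‖T3‖ ≤ mα * ((Q + P) / 2) := by
    refine le_of_sq_le_sq' (norm_nonneg _) (by positivity) ?_
    have hcs := state_CS hφ a (star (a - (α * l) • 1))
    rw [star_star] at hcs
    have h2 := state_gamma_bound hφ a α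
    rw [← hl, ← hmα, ← hP] at h2
    calc ‖T3‖ ^ 2
        ≤ (φ (star a * a)).re
            * (φ ((a - (α * l) • 1) * star (a - (α * l) • 1))).re := hcs
      _ ≤ Q * (mα ^ 2 * P) := mul_le_mul_of_nonneg_left h2 hQ0
      _ ≤ (mα * ((Q + P) / 2)) ^ 2 := by nlinarith [sq_nonneg (Q - P), sq_nonneg mα]
  -- Q + P ≤ norm
  have hQP : Q + P ≤ ‖star a * a + a * star a‖ := by
    have hsum : (φ (star a * a + a * star a)).re = Q + P := by
      rw [map_add, Complex.add_re]
    have hsa : IsSelfAdjoint (star a * a + a * star a) := by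
      apply IsSelfAdjoint.add
      · exact IsSelfAdjoint.star_mul_self a
      · exact IsSelfAdjoint.mul_star_self a
    have := state_selfadj_le hφ _ hsa
    rw [hsum] at this
    exact this
  have hL : ‖l‖ ≤ ‖a‖ := state_abs_le_norm hφ a
  have hL0 : 0 ≤ ‖l‖ := norm_nonneg _
  -- assemble
  have habs3 : ‖α * β * l ^ 3‖
      = ‖α‖ * ‖β‖ * ‖l‖ ^ 3 := by
    rw [norm_mul, norm_mul, norm_pow]
  have htri : ‖α * β * l ^ 3‖
      ≤ ‖φ (a ^ 3)‖ + ‖T2‖ + ‖β‖ * ‖l‖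
          * ‖T3‖ := by
    rw [← hid]
    have h1 := norm_sub_le (φ (a ^ 3) - T2) (β * l * T3)
    have h2 := norm_sub_le (φ (a ^ 3)) T2
    have h3 : ‖β * l * T3‖ = ‖β‖ * ‖l‖ * ‖T3‖ := by
      rw [norm_mul, norm_mul]
    linarith
  have hβ0 : 0 < ‖β‖ := by simpa [norm_pos_iff] using hβ
  have hα0 : 0 < ‖α‖ := by simpa [norm_pos_iff] using hα
  have main : ‖α‖ * ‖β‖ * ‖l‖ ^ 3
      ≤ ‖φ (a ^ 3)‖ + mβ * ‖a ^ 2‖ * ‖a‖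
          + ‖β‖ * ‖a‖ * (mα * (‖star a * a + a * star a‖ / 2)) := by
    rw [← habs3]
    refine le_trans htri ?_
    have hb1 : ‖β‖ * ‖l‖ * ‖T3‖
        ≤ ‖β‖ * ‖a‖ * (mα * (‖star a * a + a * star a‖ / 2)) := by
      have s1 : ‖β‖ * ‖l‖ * ‖T3‖
          ≤ ‖β‖ * ‖a‖ * (mα * ((Q + P) / 2)) := by
        apply mul_le_mul
        · exact mul_le_mul_of_nonneg_left hL hβ0.le
        · exact hT3
        · exact norm_nonneg _
        · positivity
      refine le_trans s1 ?_
      apply mul_le_mul_of_nonneg_left _ (by positivity)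
      apply mul_le_mul_of_nonneg_left _ hmα0
      linarith
    linarith
  -- divide by |α||β|
  have habmul : ‖α * β‖ = ‖α‖ * ‖β‖ := norm_mul _ _
  rw [habmul]
  have hprod : 0 < ‖α‖ * ‖β‖ := mul_pos hα0 hβ0
  rw [show mα / (2 * ‖α‖) * ‖star a * a + a * star a‖ * ‖a‖
        + mβ / (‖α‖ * ‖β‖) * ‖a ^ 2‖ * ‖a‖
        + 1 / (‖α‖ * ‖β‖) * ‖φ (a ^ 3)‖
      = (‖φ (a ^ 3)‖ + mβ * ‖a ^ 2‖ * ‖a‖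
          + ‖β‖ * ‖a‖ * (mα * (‖star a * a + a * star a‖ / 2)))
        / (‖α‖ * ‖β‖) by field_simp; ring]
  rw [le_div_iff₀ hprod]
  calc ‖l‖ ^ 3 * (‖α‖ * ‖β‖)
      = ‖α‖ * ‖β‖ * ‖l‖ ^ 3 := by ring
    _ ≤ _ := main


end StateLemmas

/-- Theorem 2.10: for all nonzero `α, β ∈ ℂ`,
`v(a)³ ≤ (max{1,|α−1|}/(2|α|))·‖a*a + aa*‖·‖a‖ + (max{1,|β−1|}/|αβ|)·‖a²‖·‖a‖ + (1/|αβ|)·v(a³)`. -/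
theorem numRadius_cube_le
    {A : Type*} [CStarAlgebra A] (a : A) (α β : ℂ) (hα : α ≠ 0) (hβ : β ≠ 0) :
    numRadius a ^ 3 ≤
      max 1 (‖α - 1‖) / (2 * ‖α‖) * ‖star a * a + a * star a‖ * ‖a‖
        + max 1 (‖β - 1‖) / ‖α * β‖ * ‖a ^ 2‖ * ‖a‖
        + (1 / ‖α * β‖) * numRadius (a ^ 3) := by
  set R := max 1 (‖α - 1‖) / (2 * ‖α‖) * ‖star a * a + a * star a‖ * ‖a‖
        + max 1 (‖β - 1‖) / ‖α * β‖ * ‖a ^ 2‖ * ‖a‖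
        + (1 / ‖α * β‖) * numRadius (a ^ 3) with hR
  have hα0 : 0 < ‖α‖ := by simpa [norm_pos_iff] using hα
  have hβ0 : 0 < ‖β‖ := by simpa [norm_pos_iff] using hβ
  have hab0 : 0 < ‖α * β‖ := by rw [norm_mul]; exact mul_pos hα0 hβ0
  have hv3nn : 0 ≤ numRadius (a ^ 3) := by
    apply Real.sSup_nonneg
    rintro r ⟨φ, hφ, rfl⟩
    exact norm_nonneg _
  have hbdd : BddAbove {r : ℝ | ∃ φ : A →ₗ[ℂ] ℂ, IsState φ ∧ r = ‖φ (a ^ 3)‖} := by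
    refine ⟨‖a ^ 3‖, ?_⟩
    rintro r ⟨φ, hφ, rfl⟩
    exact state_abs_le_norm hφ (a ^ 3)
  have hRnn : 0 ≤ R := by
    rw [hR]
    have h1 : 0 ≤ max 1 (‖α - 1‖) := le_trans zero_le_one (le_max_left _ _)
    have h2 : 0 ≤ max 1 (‖β - 1‖) := le_trans zero_le_one (le_max_left _ _)
    positivity
  -- every element of the numerical range set has cube ≤ R
  have hmem : ∀ r ∈ {r : ℝ | ∃ φ : A →ₗ[ℂ] ℂ, IsState φ ∧ r = ‖φ a‖},
      r ^ 3 ≤ R := by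
    rintro r ⟨φ, hφ, rfl⟩
    refine le_trans (state_key hφ a α β hα hβ) ?_
    rw [hR]
    have hle : ‖φ (a ^ 3)‖ ≤ numRadius (a ^ 3) :=
      le_csSup hbdd ⟨φ, hφ, rfl⟩
    have : (1 / ‖α * β‖) * ‖φ (a ^ 3)‖
        ≤ (1 / ‖α * β‖) * numRadius (a ^ 3) :=
      mul_le_mul_of_nonneg_left hle (by positivity)
    linarith
  -- conclude via cube root
  set c := R ^ ((1 : ℝ) / 3) with hc
  have hcnn : 0 ≤ c := Real.rpow_nonneg hRnn _
  have hc3 : c ^ (3 : ℕ) = R := by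
    rw [hc, ← Real.rpow_natCast (R ^ ((1:ℝ)/3)) 3, ← Real.rpow_mul hRnn]
    norm_num
  have hsup : numRadius a ≤ c := by
    apply Real.sSup_le _ hcnn
    intro r hr
    obtain ⟨φ, hφ, hrr⟩ := hr
    have hr0 : 0 ≤ r := hrr ▸ norm_nonneg _
    have := hmem r ⟨φ, hφ, hrr⟩
    exact (pow_le_pow_iff_left₀ hr0 hcnn (three_ne_zero)).mp (by rw [hc3]; exact this)
  calc numRadius a ^ 3 ≤ c ^ 3 := by
        apply pow_le_pow_left₀ _ hsup
        apply Real.sSup_nonneg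
        rintro r ⟨φ, hφ, rfl⟩
        exact norm_nonneg _
    _ = R := hc3
end

section
/- Let A be a unital C*-algebra and a ∈ A. Then v(a)³ ≤ (1/4)·‖a*a + aa*‖·‖a‖ + (1/4)·‖a²‖·‖a‖ + (1/4)·v(a³). -/
open scoped ComplexOrder

section helpers

variable {A : Type*} [CStarAlgebra A] {φ : A →ₗ[ℂ] ℂ}

lemma exists_sqrt_add (a : A) :
    ∃ c : A, star a * a + a * star a = star c * c := by
  letI := CStarAlgebra.spectralOrder A
  haveI := CStarAlgebra.spectralOrderedRing A
  have hd : 0 ≤ star a * a + a * star a :=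
    add_nonneg (star_mul_self_nonneg a) (mul_star_self_nonneg a)
  refine ⟨CFC.sqrt (star a * a + a * star a), ?_⟩
  rw [(IsSelfAdjoint.of_nonneg ((CFC.sqrt_nonneg (a := star a * a + a * star a)))).star_eq,
    CFC.sqrt_mul_sqrt_self _ hd]

lemma IsState.im_eq (hφ : IsState φ) (z : A) : (φ (star z * z)).im = 0 :=
  ((Complex.nonneg_iff.mp (hφ.1 z)).2).symm

lemma IsState.re_nonneg (hφ : IsState φ) (z : A) : 0 ≤ (φ (star z * z)).re :=
  (Complex.nonneg_iff.mp (hφ.1 z)).1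

lemma IsState.re_le_norm (hφ : IsState φ) (y c : A) (hc : y = star c * c) :
    (φ y).re ≤ ‖y‖ := by
  letI := CStarAlgebra.spectralOrder A
  haveI := CStarAlgebra.spectralOrderedRing A
  have hy : 0 ≤ y := hc ▸ star_mul_self_nonneg c
  have h1 : y ≤ algebraMap ℝ A ‖y‖ :=
    IsSelfAdjoint.le_algebraMap_norm_self (.of_nonneg hy)
  have h2 : 0 ≤ algebraMap ℝ A ‖y‖ - y := sub_nonneg.mpr h1
  obtain ⟨e, he⟩ : ∃ e : A, algebraMap ℝ A ‖y‖ - y = star e * e := by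
    refine ⟨CFC.sqrt (algebraMap ℝ A ‖y‖ - y), ?_⟩
    rw [(IsSelfAdjoint.of_nonneg ((CFC.sqrt_nonneg (a := algebraMap ℝ A ‖y‖ - y)))).star_eq,
      CFC.sqrt_mul_sqrt_self _ h2]
  have h3 := hφ.1 e
  rw [← he, map_sub] at h3
  have h4 : φ (algebraMap ℝ A ‖y‖) = (‖y‖ : ℂ) := by
    rw [IsScalarTower.algebraMap_apply ℝ ℂ A, Algebra.algebraMap_eq_smul_one,
      map_smul, hφ.2, smul_eq_mul, mul_one, Complex.coe_algebraMap]
  rw [h4] at h3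
  have := (Complex.nonneg_iff.mp h3).1
  simpa using this

lemma IsState.herm (hφ : IsState φ) (x y : A) :
    φ (star y * x) = starRingEnd ℂ (φ (star x * y)) := by
  have h1 := hφ.im_eq (x + y)
  have h2 := hφ.im_eq (x + Complex.I • y)
  have e1 : star (x + y) * (x + y)
      = star x * x + (star x * y + star y * x) + star y * y := by
    simp only [star_add, add_mul, mul_add]; abel
  have e2 : star (x + Complex.I • y) * (x + Complex.I • y)
      = star x * x + (Complex.I • (star x * y) + (-Complex.I) • (star y * x))
        + star y * y := by
    simp only [star_add, star_smul, add_mul, mul_add, smul_mul_assoc,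
      mul_smul_comm, smul_smul, smul_add, Complex.star_def, Complex.conj_I]
    rw [show Complex.I * -Complex.I = (1 : ℂ) by
      simp [mul_neg, Complex.I_mul_I]]
    simp only [one_smul, neg_smul]
    abel
  rw [e1] at h1
  rw [e2] at h2
  simp only [map_add, map_smul, Complex.add_im, Complex.smul_im, smul_eq_mul,
    Complex.mul_im, Complex.I_re, Complex.I_im, Complex.neg_re, Complex.neg_im,
    hφ.im_eq x, hφ.im_eq y, Complex.mul_re] at h1 h2
  apply Complex.ext <;>
    simp only [Complex.conj_re, Complex.conj_im] <;> linarith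

lemma IsState.map_star (hφ : IsState φ) (x : A) :
    φ (star x) = starRingEnd ℂ (φ x) := by
  have := hφ.herm 1 x
  simpa using this

lemma IsState.cs (hφ : IsState φ) (x y : A) :
    Complex.normSq (φ (star x * y)) ≤ (φ (star x * x)).re * (φ (star y * y)).re := by
  have hp0 : 0 ≤ (φ (star x * x)).re := hφ.re_nonneg x
  have hq0 : 0 ≤ (φ (star y * y)).re := hφ.re_nonneg y
  set c := φ (star x * y) with hc
  set p := (φ (star x * x)).re
  set q := (φ (star y * y)).re
  have key : ∀ s : ℝ,
      0 ≤ p - 2 * s * Complex.normSq c + s ^ 2 * Complex.normSq c * q := by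
    intro s
    have h := hφ.re_nonneg (x + (-(s : ℂ) * starRingEnd ℂ c) • y)
    have e : star (x + (-(s : ℂ) * starRingEnd ℂ c) • y)
          * (x + (-(s : ℂ) * starRingEnd ℂ c) • y)
        = star x * x + (-(s : ℂ) * starRingEnd ℂ c) • (star x * y)
          + (starRingEnd ℂ (-(s : ℂ) * starRingEnd ℂ c)) • (star y * x)
          + ((-(s : ℂ) * starRingEnd ℂ c)
              * starRingEnd ℂ (-(s : ℂ) * starRingEnd ℂ c)) • (star y * y) := by
      simp only [star_add, star_smul, add_mul, mul_add, smul_mul_assoc,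
        mul_smul_comm, smul_smul, smul_add, Complex.star_def]
      abel
    rw [e] at h
    simp only [map_add, map_smul, smul_eq_mul, hφ.herm x y, ← hc] at h
    simp only [map_mul, map_neg, Complex.conj_conj, Complex.conj_ofReal] at h
    simp only [Complex.add_re, Complex.mul_re, Complex.mul_im, Complex.neg_re,
      Complex.neg_im, Complex.ofReal_re, Complex.ofReal_im, Complex.conj_re,
      Complex.conj_im, hφ.im_eq x, hφ.im_eq y] at h
    simp only [Complex.normSq_apply]
    nlinarith [h]
  rcases (eq_or_lt_of_le hq0).imp Eq.symm id with hq | hq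
  · by_contra hlt
    push_neg at hlt
    rw [hq, mul_zero] at hlt
    have hn : 0 < Complex.normSq c := hlt
    have h := key ((p + 1) / (2 * Complex.normSq c))
    rw [hq, mul_zero, add_zero] at h
    rw [show 2 * ((p + 1) / (2 * Complex.normSq c)) * Complex.normSq c = p + 1 by
      field_simp] at h
    linarith [h]
  · have h := key q⁻¹
    have hq' : q ≠ 0 := ne_of_gt hq
    have e1 : (q⁻¹) ^ 2 * Complex.normSq c * q = q⁻¹ * Complex.normSq c := by
      field_simp
    rw [e1] at h
    have h2 : q⁻¹ * Complex.normSq c ≤ p := by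
      have e2 : 2 * q⁻¹ * Complex.normSq c = 2 * (q⁻¹ * Complex.normSq c) := by ring
      linarith [h, e2 ▸ h]
    have h3 := mul_le_mul_of_nonneg_left h2 hq.le
    rw [← mul_assoc, mul_inv_cancel₀ hq', one_mul] at h3
    linarith [h3]

lemma IsState.abs_le_norm (hφ : IsState φ) (x : A) : ‖φ x‖ ≤ ‖x‖ := by
  have h := hφ.cs 1 x
  simp only [star_one, one_mul, mul_one, hφ.2, Complex.one_re] at h
  have h2 : (φ (star x * x)).re ≤ ‖star x * x‖ := hφ.re_le_norm _ x rfl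
  have h3 : ‖star x * x‖ = ‖x‖ * ‖x‖ := CStarRing.norm_star_mul_self
  calc ‖φ x‖ = Real.sqrt (Complex.normSq (φ x)) := Complex.norm_def _
    _ ≤ Real.sqrt (‖x‖ * ‖x‖) := Real.sqrt_le_sqrt (by linarith)
    _ = ‖x‖ := Real.sqrt_mul_self (norm_nonneg x)

lemma IsState.buzano (hφ : IsState φ) (a : A) :
    2 * (‖φ a‖ * ‖φ (a * a)‖) ≤
      ‖a‖ * ‖a * a‖ + ‖φ (a * (a * a))‖ := by
  set w := a * a with hw
  set lam : ℂ := 2 * φ w with hlam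
  -- the reflected vector
  have hstarw : φ (star w) = starRingEnd ℂ (φ w) := hφ.map_star w
  have e0 : star (lam • (1 : A) - w) * (lam • (1 : A) - w)
      = (lam * starRingEnd ℂ lam) • (1 : A) - (starRingEnd ℂ lam) • w
        - lam • star w + star w * w := by
    simp only [star_sub, star_smul, star_one, sub_mul, mul_sub, smul_mul_assoc,
      mul_smul_comm, smul_smul, smul_sub, smul_add, sub_smul, neg_smul, mul_one,
      one_mul, Complex.star_def]
    abel
  have h1 : φ (star (lam • (1 : A) - w) * (lam • (1 : A) - w)) = φ (star w * w) := by
    rw [e0]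
    simp only [map_add, map_sub, map_smul, smul_eq_mul, hφ.2, mul_one, hstarw, hlam]
    simp only [map_mul, map_ofNat]
    ring
  have hcs := hφ.cs (star a) (lam • (1 : A) - w)
  rw [star_star] at hcs
  have e1 : φ (a * (lam • (1 : A) - w)) = lam * φ a - φ (a * w) := by
    rw [mul_sub, mul_smul_comm, mul_one, map_sub, map_smul, smul_eq_mul]
  rw [e1, h1] at hcs
  have hA : (φ (a * star a)).re ≤ ‖a‖ * ‖a‖ := by
    have h := hφ.re_le_norm (a * star a) (star a) (by rw [star_star])
    rwa [CStarRing.norm_self_mul_star] at h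
  have hW : (φ (star w * w)).re ≤ ‖w‖ * ‖w‖ := by
    have h := hφ.re_le_norm (star w * w) w rfl
    rwa [CStarRing.norm_star_mul_self] at h
  have hA0 : 0 ≤ (φ (a * star a)).re := by
    have h := hφ.re_nonneg (star a); rwa [star_star] at h
  have hW0 : 0 ≤ (φ (star w * w)).re := hφ.re_nonneg w
  have h2 : Complex.normSq (lam * φ a - φ (a * w)) ≤ (‖a‖ * ‖w‖) ^ 2 := by
    calc Complex.normSq (lam * φ a - φ (a * w))
        ≤ (φ (a * star a)).re * (φ (star w * w)).re := hcs
      _ ≤ (‖a‖ * ‖a‖) * (‖w‖ * ‖w‖) := by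
          apply mul_le_mul hA hW hW0 (by positivity)
      _ = (‖a‖ * ‖w‖) ^ 2 := by ring
  have h3 : ‖lam * φ a - φ (a * w)‖ ≤ ‖a‖ * ‖w‖ := by
    rw [Complex.norm_def]
    calc Real.sqrt (Complex.normSq (lam * φ a - φ (a * w)))
        ≤ Real.sqrt ((‖a‖ * ‖w‖) ^ 2) := Real.sqrt_le_sqrt h2
      _ = ‖a‖ * ‖w‖ := Real.sqrt_sq (by positivity)
  have h4 : ‖lam * φ a‖ ≤ ‖a‖ * ‖w‖ + ‖φ (a * w)‖ := by
    calc ‖lam * φ a‖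
        = ‖(lam * φ a - φ (a * w)) + φ (a * w)‖ := by ring_nf
      _ ≤ ‖lam * φ a - φ (a * w)‖ + ‖φ (a * w)‖ :=
          norm_add_le _ _
      _ ≤ ‖a‖ * ‖w‖ + ‖φ (a * w)‖ := by linarith [h3]
  have h5 : ‖lam * φ a‖ = 2 * (‖φ a‖ * ‖φ (a * a)‖) := by
    rw [norm_mul, hlam, norm_mul]
    norm_num
    ring
  rw [h5] at h4
  exact h4

lemma IsState.key (hφ : IsState φ) (a : A) :
    4 * ‖φ a‖ ^ 3 ≤
      ‖star a * a + a * star a‖ * ‖a‖ + ‖a * a‖ * ‖a‖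
        + ‖φ (a * (a * a))‖ := by
  rcases eq_or_ne (φ a) 0 with hz | hz
  · rw [hz, norm_zero]
    norm_num
    positivity
  · set z := φ a with hzdef
    set r := ‖z‖ with hrdef
    have hr0 : 0 < r := by
      rw [hrdef]
      exact (norm_pos_iff.mpr hz)
    set u : ℂ := starRingEnd ℂ z / (r : ℂ) with hu
    have hrne : (r : ℂ) ≠ 0 := by exact_mod_cast ne_of_gt hr0
    have huz : u * z = (r : ℂ) := by
      rw [hu, div_mul_eq_mul_div, mul_comm, Complex.mul_conj, Complex.normSq_eq_norm_sq,
        ← hrdef, div_eq_iff hrne]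
      push_cast
      ring
    have huu : u * starRingEnd ℂ u = 1 := by
      rw [hu]
      simp only [map_div₀, Complex.conj_conj, Complex.conj_ofReal]
      rw [div_mul_div_comm, mul_comm (starRingEnd ℂ z) z, Complex.mul_conj,
        Complex.normSq_eq_norm_sq, ← hrdef]
      push_cast
      rw [sq]
      exact div_self (mul_ne_zero hrne hrne)
    have huu' : starRingEnd ℂ u * u = 1 := by rw [mul_comm]; exact huu
    set b : A := u • a with hb
    have hφb : φ b = (r : ℂ) := by rw [hb, map_smul, smul_eq_mul, ← hzdef, huz]
    have hφsb : φ (star b) = (r : ℂ) := by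
      rw [hφ.map_star, hφb, Complex.conj_ofReal]
    set x : A := b + star b with hx
    have hφx : φ x = ((2 * r : ℝ) : ℂ) := by
      rw [hx, map_add, hφb, hφsb]
      push_cast
      ring
    have hsx : star x = x := by rw [hx, star_add, star_star, add_comm]
    have hcs := hφ.cs 1 x
    rw [star_one, one_mul, one_mul, hφ.2, Complex.one_re, one_mul, hφx,
      Complex.normSq_ofReal, hsx] at hcs
    -- hcs : (2*r)^2 ≤ (φ (x * x)).re
    have hbsb : b * star b = a * star a := by
      rw [hb, star_smul, smul_mul_assoc, mul_smul_comm, smul_smul, Complex.star_def,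
        huu, one_smul]
    have hsbb : star b * b = star a * a := by
      rw [hb, star_smul, smul_mul_assoc, mul_smul_comm, smul_smul, Complex.star_def,
        huu', one_smul]
    have hex : x * x = b * b + star (b * b) + (star a * a + a * star a) := by
      rw [star_mul]
      rw [hx, add_mul, mul_add, mul_add, hbsb, hsbb]
      abel
    have hstarbb : (φ (star (b * b))).re = (φ (b * b)).re := by
      rw [hφ.map_star, Complex.conj_re]
    obtain ⟨cd, hcd⟩ := exists_sqrt_add a
    have hdle : (φ (star a * a + a * star a)).re ≤ ‖star a * a + a * star a‖ :=
      hφ.re_le_norm _ cd hcd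
    have habsbb : ‖φ (b * b)‖ = ‖φ (a * a)‖ := by
      have e : b * b = (u * u) • (a * a) := by
        rw [hb, smul_mul_assoc, mul_smul_comm, smul_smul]
      rw [e, map_smul, smul_eq_mul, norm_mul, norm_mul]
      have habsu : ‖u‖ = 1 := by
        have := congrArg norm huu
        rw [norm_mul, Complex.norm_conj, norm_one] at this
        nlinarith [norm_nonneg u, this]
      rw [habsu]
      ring
    have hrebb : (φ (b * b)).re ≤ ‖φ (a * a)‖ := by
      rw [← habsbb]
      exact Complex.re_le_norm _
    have hsq : 4 * r ^ 2 ≤ 2 * ‖φ (a * a)‖ + ‖star a * a + a * star a‖ := by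
      rw [hex, map_add, map_add] at hcs
      simp only [Complex.add_re] at hcs
      nlinarith [hcs, hstarbb, hrebb, hdle]
    have hbuz := hφ.buzano a
    have hra : r ≤ ‖a‖ := hφ.abs_le_norm a
    have habs0 : 0 ≤ ‖φ (a * a)‖ := norm_nonneg _
    have hd0 : 0 ≤ ‖star a * a + a * star a‖ := norm_nonneg _
    nlinarith [mul_le_mul_of_nonneg_right hsq hr0.le,
      mul_le_mul_of_nonneg_left hra hd0, hbuz, hr0.le, habs0]

end helpers

/-- Corollary 2.11:
`v(a)³ ≤ (1/4)·‖a*a + aa*‖·‖a‖ + (1/4)·‖a²‖·‖a‖ + (1/4)·v(a³)`. -/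
theorem numRadius_cube_le_quarter
    {A : Type*} [CStarAlgebra A] (a : A) :
    numRadius a ^ 3 ≤
      (1 / 4) * ‖star a * a + a * star a‖ * ‖a‖
        + (1 / 4) * ‖a ^ 2‖ * ‖a‖ + (1 / 4) * numRadius (a ^ 3) := by
  have hcube : a ^ 3 = a * (a * a) := by rw [pow_succ, pow_two, mul_assoc]
  have hsq : a ^ 2 = a * a := sq a
  have hb3 : BddAbove {r : ℝ | ∃ φ : A →ₗ[ℂ] ℂ, IsState φ ∧ r = ‖φ (a ^ 3)‖} := by
    refine ⟨‖a ^ 3‖, ?_⟩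
    rintro r ⟨ψ, hψ, rfl⟩
    exact hψ.abs_le_norm _
  have hv3 : 0 ≤ numRadius (a ^ 3) :=
    Real.sSup_nonneg (by rintro r ⟨ψ, hψ, rfl⟩; positivity)
  set M : ℝ := (1 / 4) * ‖star a * a + a * star a‖ * ‖a‖
        + (1 / 4) * ‖a ^ 2‖ * ‖a‖ + (1 / 4) * numRadius (a ^ 3) with hM
  have hM0 : 0 ≤ M := by
    have h1 : (0:ℝ) ≤ (1 / 4) * ‖star a * a + a * star a‖ * ‖a‖ := by positivity
    have h2 : (0:ℝ) ≤ (1 / 4) * ‖a ^ 2‖ * ‖a‖ := by positivity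
    rw [hM]
    linarith
  have hkey : ∀ r ∈ {r : ℝ | ∃ φ : A →ₗ[ℂ] ℂ, IsState φ ∧ r = ‖φ a‖},
      r ^ 3 ≤ M := by
    rintro r ⟨ψ, hψ, rfl⟩
    have h := hψ.key a
    have hmem : ‖ψ (a * (a * a))‖
        ∈ {r : ℝ | ∃ φ : A →ₗ[ℂ] ℂ, IsState φ ∧ r = ‖φ (a ^ 3)‖} :=
      ⟨ψ, hψ, by rw [hcube]⟩
    have hb := le_csSup hb3 hmem
    rw [hM, hsq]
    have : numRadius (a ^ 3)
        = sSup {r : ℝ | ∃ φ : A →ₗ[ℂ] ℂ, IsState φ ∧ r = ‖φ (a ^ 3)‖} := rfl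
    rw [← this] at hb
    linarith
  rcases Set.eq_empty_or_nonempty
      {r : ℝ | ∃ φ : A →ₗ[ℂ] ℂ, IsState φ ∧ r = ‖φ a‖} with hS | hS
  · have : numRadius a = 0 := by
      rw [numRadius, hS, Real.sSup_empty]
    rw [this]
    norm_num
    exact hM0
  · have hnr0 : 0 ≤ numRadius a := by
      rw [numRadius]
      exact Real.sSup_nonneg (by rintro r ⟨ψ, hψ, rfl⟩; positivity)
    have hle : numRadius a ≤ M ^ ((3 : ℕ) : ℝ)⁻¹ := by
      apply csSup_le hS
      rintro r ⟨ψ, hψ, rfl⟩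
      have hr0 : (0:ℝ) ≤ ‖ψ a‖ := by positivity
      have h3 := hkey _ ⟨ψ, hψ, rfl⟩
      calc ‖ψ a‖
          = ((‖ψ a‖) ^ (3:ℕ)) ^ ((3:ℕ) : ℝ)⁻¹ :=
            (Real.pow_rpow_inv_natCast hr0 (by norm_num)).symm
        _ ≤ M ^ ((3:ℕ) : ℝ)⁻¹ :=
            Real.rpow_le_rpow (by positivity) h3 (by positivity)
    calc numRadius a ^ 3 ≤ (M ^ ((3 : ℕ) : ℝ)⁻¹) ^ (3:ℕ) := by
          exact pow_le_pow_left₀ hnr0 hle 3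
      _ = M := Real.rpow_inv_natCast_pow hM0 (by norm_num)
end
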